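/- Let 0 < δ < ε, X ⊂ ℝ^m a compact box covered by sub-boxes Y^1,...,Y^N, f: ℝ^m → ℝ^p continuous, and f^k ≤ f componentwise on each Y^k with gap f_j(x) - f_j^k(x) < ε - δ for all j, x ∈ Y^k. Then every δ-weakly efficient solution of min_X f belongs to the set X^ε_{wE_ap} = {x ∈ ⋃_k W^ε_k : ∄ y ∈ ⋃_k W^ε_k with f(y) + ε·e ≺ f(x)}, where W^ε_k is the ε-weakly efficient solution set of min_{Y^k} f^k. -/
import Mathlib


/-- Every `δ`-weakly efficient solution of the original problem belongs to the `ε`-weakly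
efficient solution set of the piecewise convexification problem, for `0 < δ < ε` and
relaxation gap less than `ε - δ`. -/
theorem stmt13 (m p N : ℕ) (Y : Fin N → Set (Fin m → ℝ))
    (f : (Fin m → ℝ) → Fin p → ℝ) (hf : Continuous f)
    (fk : Fin N → (Fin m → ℝ) → Fin p → ℝ)
    (δ ε : ℝ) (hδ : 0 < δ) (hδε : δ < ε)
    (hle : ∀ k, ∀ x ∈ Y k, ∀ j, fk k x j ≤ f x j)
    (hgap : ∀ k, ∀ x ∈ Y k, ∀ j, f x j - fk k x j < ε - δ)
    (Wε : Fin N → Set (Fin m → ℝ))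
    (hWε : ∀ k, Wε k = {z ∈ Y k | ¬∃ y ∈ Y k, ∀ j, fk k y j + ε < fk k z j})
    (x : Fin m → ℝ) (hx : x ∈ ⋃ k, Y k)
    (hdweff : ¬∃ y ∈ ⋃ k, Y k, ∀ j, f y j + δ < f x j) :
    x ∈ {z ∈ ⋃ k, Wε k | ¬∃ y ∈ ⋃ k, Wε k, ∀ j, f y j + ε < f z j} := by
  obtain ⟨Yk, ⟨k, rfl⟩, hxk⟩ := hx
  constructor
  · refine Set.mem_iUnion.2 ⟨k, ?_⟩
    rw [hWε]
    refine ⟨hxk, ?_⟩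
    rintro ⟨y, hy, hlt⟩
    exact hdweff ⟨y, Set.mem_iUnion.2 ⟨k, hy⟩, fun j => by
      have h1 := hgap k y hy j
      have h2 := hle k x hxk j
      have h3 := hlt j
      linarith⟩
  · rintro ⟨y, hy, hlt⟩
    obtain ⟨Wk, ⟨k', rfl⟩, hyk⟩ := hy
    simp only [hWε] at hyk
    exact hdweff ⟨y, Set.mem_iUnion.2 ⟨k', hyk.1⟩, fun j => by linarith [hlt j]⟩
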